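/- For every p > 1 and every x ∈ (0,1), the following two-sided bound holds: x·(1 − log(1−x^p)/(1+p)) < artanh_p(x) < x·(1 − (1/p)·log(1−x^p)). -/

import Mathlib

open Real

lemma aux_hasDerivAt (p c t : ℝ) (hp : 1 < p) (ht : t ^ p ≠ 1) :
    HasDerivAt (fun y : ℝ => y * (1 - c * Real.log (1 - y ^ p)))
      ((1 - c * Real.log (1 - t ^ p)) + t * (c * (p * t ^ (p - 1)) / (1 - t ^ p))) t := by
  have h1 : HasDerivAt (fun y : ℝ => y ^ p) (p * t ^ (p - 1)) t :=
    Real.hasDerivAt_rpow_const (Or.inr hp.le)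
  have h2 : HasDerivAt (fun y : ℝ => 1 - y ^ p) (-(p * t ^ (p - 1))) t := by
    exact ((hasDerivAt_const t (1:ℝ)).sub h1).congr_deriv (by simp)
  have h3 : HasDerivAt (fun y : ℝ => Real.log (1 - y ^ p))
      (-(p * t ^ (p - 1)) / (1 - t ^ p)) t :=
    h2.log (sub_ne_zero.mpr (Ne.symm ht))
  have h4 : HasDerivAt (fun y : ℝ => 1 - c * Real.log (1 - y ^ p))
      (c * (p * t ^ (p - 1)) / (1 - t ^ p)) t := by
    have h := (hasDerivAt_const t (1:ℝ)).sub (h3.const_mul c)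
    exact h.congr_deriv (by ring)
  exact ((hasDerivAt_id t).mul h4).congr_deriv (by simp)

/-- The generalized inverse hyperbolic tangent: `artanh_p x = ∫₀ˣ (1 - tᵖ)⁻¹ dt`. -/
noncomputable def artanhp (p x : ℝ) : ℝ := ∫ t in (0:ℝ)..x, (1 - t ^ p)⁻¹

theorem artanhp_bounds (p x : ℝ) (hp : 1 < p) (hx : x ∈ Set.Ioo (0:ℝ) 1) :
    x * (1 - Real.log (1 - x ^ p) / (1 + p)) < artanhp p x ∧
      artanhp p x < x * (1 - (1 / p) * Real.log (1 - x ^ p)) := by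
  obtain ⟨hx0, hx1⟩ := hx
  have hp0 : (0:ℝ) < p := by linarith
  have h1p : (0:ℝ) < 1 + p := by linarith
  have key : ∀ t ∈ Set.Icc (0:ℝ) x, t ^ p < 1 := fun t ht =>
    lt_of_le_of_lt (Real.rpow_le_rpow ht.1 ht.2 hp0.le) (Real.rpow_lt_one hx0.le hx1 hp0)
  have hcp : Continuous fun t : ℝ => t ^ p := Real.continuous_rpow_const hp0.le
  have hcp1 : Continuous fun t : ℝ => t ^ (p - 1) :=
    Real.continuous_rpow_const (by linarith)
  have hne : ∀ t ∈ Set.Icc (0:ℝ) x, 1 - t ^ p ≠ 0 := fun t ht =>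
    sub_ne_zero.mpr (key t ht).ne'
  -- f continuity / integrability
  have hfc : ContinuousOn (fun t : ℝ => (1 - t ^ p)⁻¹) (Set.Icc 0 x) :=
    ((continuous_const.sub hcp).continuousOn).inv₀ hne
  have huicc : Set.uIcc (0:ℝ) x = Set.Icc 0 x := Set.uIcc_of_le hx0.le
  have hfint : IntervalIntegrable (fun t : ℝ => (1 - t ^ p)⁻¹) MeasureTheory.volume 0 x := by
    apply ContinuousOn.intervalIntegrable; rwa [huicc]
  -- generic derivative function
  set Fd : ℝ → ℝ → ℝ := fun c t =>
    (1 - c * Real.log (1 - t ^ p)) + t * (c * (p * t ^ (p - 1)) / (1 - t ^ p)) with hFd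
  have hFdc : ∀ c, ContinuousOn (Fd c) (Set.Icc 0 x) := by
    intro c
    apply ContinuousOn.add
    · exact (continuousOn_const.sub (continuousOn_const.mul
        (((continuous_const.sub hcp).continuousOn).log hne)))
    · exact continuousOn_id.mul ((continuousOn_const.mul
        (continuousOn_const.mul hcp1.continuousOn)).div
        ((continuous_const.sub hcp).continuousOn) hne)
  have hFdint : ∀ c, IntervalIntegrable (Fd c) MeasureTheory.volume 0 x := by
    intro c; apply ContinuousOn.intervalIntegrable; rw [huicc]; exact hFdc c
  have hftc : ∀ c, ∫ t in (0:ℝ)..x, Fd c t = x * (1 - c * Real.log (1 - x ^ p)) := by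
    intro c
    rw [intervalIntegral.integral_eq_sub_of_hasDerivAt
      (fun t ht => aux_hasDerivAt p c t hp (key t (huicc ▸ ht)).ne) (hFdint c)]
    ring
  -- pointwise facts on (0,x)
  have hpw : ∀ t ∈ Set.Ioo (0:ℝ) x, ∀ c,
      t * (c * (p * t ^ (p - 1)) / (1 - t ^ p)) = c * p * (t ^ p / (1 - t ^ p)) := by
    intro t ht c
    have htp : t * t ^ (p - 1) = t ^ p := by
      have h := Real.rpow_add ht.1 1 (p - 1)
      rw [Real.rpow_one] at h
      rw [← h]; ring_nf
    calc t * (c * (p * t ^ (p - 1)) / (1 - t ^ p))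
        = (t * t ^ (p - 1)) * (c * p / (1 - t ^ p)) := by ring
      _ = c * p * (t ^ p / (1 - t ^ p)) := by rw [htp]; ring
  -- upper bound
  have hup : 0 < ∫ t in (0:ℝ)..x, (Fd (1/p) t - (1 - t ^ p)⁻¹) := by
    apply intervalIntegral.intervalIntegral_pos_of_pos_on
      ((hFdint (1/p)).sub hfint) _ hx0
    intro t ht
    have ht' : t ∈ Set.Icc (0:ℝ) x := ⟨ht.1.le, ht.2.le⟩
    have hu1 : t ^ p < 1 := key t ht'
    have hu0 : 0 < t ^ p := Real.rpow_pos_of_pos ht.1 p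
    have h1u : 0 < 1 - t ^ p := by linarith
    have hL : Real.log (1 - t ^ p) < 0 := Real.log_neg h1u (by linarith)
    have hinv : (1 - t ^ p)⁻¹ = 1 + t ^ p / (1 - t ^ p) := by field_simp; ring
    simp only [hFd]
    rw [hpw t ht, hinv]
    have e1 : (1/p) * p * (t ^ p / (1 - t ^ p)) = t ^ p / (1 - t ^ p) := by
      field_simp
    rw [e1]
    have hpos : 0 < (1/p) * (-Real.log (1 - t ^ p)) :=
      mul_pos (by positivity) (by linarith)
    nlinarith
  -- lower bound
  have hlo : 0 < ∫ t in (0:ℝ)..x, ((1 - t ^ p)⁻¹ - Fd (1/(1+p)) t) := by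
    apply intervalIntegral.intervalIntegral_pos_of_pos_on
      (hfint.sub (hFdint (1/(1+p)))) _ hx0
    intro t ht
    have ht' : t ∈ Set.Icc (0:ℝ) x := ⟨ht.1.le, ht.2.le⟩
    have hu1 : t ^ p < 1 := key t ht'
    have hu0 : 0 < t ^ p := Real.rpow_pos_of_pos ht.1 p
    have h1u : 0 < 1 - t ^ p := by linarith
    have hloglt : -Real.log (1 - t ^ p) < (1 - t ^ p)⁻¹ - 1 := by
      have h := Real.log_lt_sub_one_of_pos (inv_pos.mpr h1u)
        (by rw [ne_eq, inv_eq_one]; linarith)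
      rwa [Real.log_inv] at h
    have hinv : (1 - t ^ p)⁻¹ = 1 + t ^ p / (1 - t ^ p) := by field_simp; ring
    have hsum : 0 < t ^ p / (1 - t ^ p) + Real.log (1 - t ^ p) := by
      have : t ^ p / (1 - t ^ p) = (1 - t ^ p)⁻¹ - 1 := by field_simp; ring
      linarith
    simp only [hFd]
    rw [hpw t ht, hinv]
    have e2 : (1/(1+p)) * p * (t ^ p / (1 - t ^ p)) = p / (1+p) * (t ^ p / (1 - t ^ p)) := by
      ring
    rw [e2]
    have egoal : 1 + t ^ p / (1 - t ^ p) -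
        ((1 - 1/(1+p) * Real.log (1 - t ^ p)) + p / (1+p) * (t ^ p / (1 - t ^ p)))
        = (t ^ p / (1 - t ^ p) + Real.log (1 - t ^ p)) / (1 + p) := by
      field_simp
      ring
    rw [egoal]
    exact div_pos hsum h1p
  constructor
  · have h := hlo
    rw [intervalIntegral.integral_sub hfint (hFdint (1/(1+p))), hftc] at h
    have : x * (1 - Real.log (1 - x ^ p) / (1 + p))
        = x * (1 - 1/(1+p) * Real.log (1 - x ^ p)) := by ring
    rw [this]
    unfold artanhp
    linarith
  · have h := hup
    rw [intervalIntegral.integral_sub (hFdint (1/p)) hfint, hftc] at h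
    unfold artanhp
    linarith
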